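/- Let ⟨[0,1], ⊕_p⟩ be a convex algebra satisfying (MO) and (UC). Then for all x, y ∈ [0,1] with x ≤ y and all q ∈ (0,1), the right limit in the parameter holds: y ⊕_p x tends to y ⊕_q x as p → q from above. -/

import Mathlib

open Set Filter Topology

/-- A convex algebra on the interval `[0,1] ⊆ ℝ`: `op p x y` denotes `x ⊕_p y`,
for `p ∈ (0,1)`, extended to `p ∈ [0,1]` by the projection axioms
`x ⊕_1 y = x` and `x ⊕_0 y = y`.  All axioms are required only on `[0,1]`;
values of `op` outside `[0,1]` are irrelevant. -/
structure UCA where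
  op : ℝ → ℝ → ℝ → ℝ
  mem : ∀ p ∈ Set.Icc (0:ℝ) 1, ∀ x ∈ Set.Icc (0:ℝ) 1, ∀ y ∈ Set.Icc (0:ℝ) 1,
      op p x y ∈ Set.Icc (0:ℝ) 1
  idem : ∀ p ∈ Set.Ioo (0:ℝ) 1, ∀ x ∈ Set.Icc (0:ℝ) 1, op p x x = x
  comm : ∀ p ∈ Set.Ioo (0:ℝ) 1, ∀ x ∈ Set.Icc (0:ℝ) 1, ∀ y ∈ Set.Icc (0:ℝ) 1,
      op p x y = op (1 - p) y x
  assoc : ∀ p ∈ Set.Ioo (0:ℝ) 1, ∀ q ∈ Set.Ioo (0:ℝ) 1,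
      ∀ x ∈ Set.Icc (0:ℝ) 1, ∀ y ∈ Set.Icc (0:ℝ) 1, ∀ z ∈ Set.Icc (0:ℝ) 1,
      op q (op p x y) z = op (p * q) x (op ((1 - p) * q / (1 - p * q)) y z)
  proj1 : ∀ x ∈ Set.Icc (0:ℝ) 1, ∀ y ∈ Set.Icc (0:ℝ) 1, op 1 x y = x
  proj0 : ∀ x ∈ Set.Icc (0:ℝ) 1, ∀ y ∈ Set.Icc (0:ℝ) 1, op 0 x y = y

/-- Monotonicity (MO): `x ≤ x'` implies `x ⊕_p y ≤ x' ⊕_p y`. -/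
def UCA.MO (A : UCA) : Prop :=
  ∀ x ∈ Set.Icc (0:ℝ) 1, ∀ x' ∈ Set.Icc (0:ℝ) 1, ∀ y ∈ Set.Icc (0:ℝ) 1,
    ∀ p ∈ Set.Ioo (0:ℝ) 1, x ≤ x' → A.op p x y ≤ A.op p x' y

/-- (UC): for `x, y ∈ [0,1)` and `p ∈ (0,1)`,
`limsup_{ε→0⁺} ((x+ε) ⊕_p (y+ε)) ≤ x ⊕_p y`. -/
def UCA.UC (A : UCA) : Prop :=
  ∀ x ∈ Set.Ico (0:ℝ) 1, ∀ y ∈ Set.Ico (0:ℝ) 1, ∀ p ∈ Set.Ioo (0:ℝ) 1,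
    Filter.limsup (fun ε => A.op p (x + ε) (y + ε)) (𝓝[>] (0:ℝ)) ≤ A.op p x y

/-- (LC): for `x ≤ y` in `[0,1]`, `liminf_{p→1⁻} (y ⊕_p x) ≥ y`. -/
def UCA.LC (A : UCA) : Prop :=
  ∀ x ∈ Set.Icc (0:ℝ) 1, ∀ y ∈ Set.Icc (0:ℝ) 1, x ≤ y →
    y ≤ Filter.liminf (fun p => A.op p y x) (𝓝[<] (1:ℝ))

/-- `y ⊳ x` : `y` eats `x`, i.e. `y ⊕_t x = y` for all `t ∈ (0,1]`. -/
def UCA.Eats (A : UCA) (y x : ℝ) : Prop :=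
  ∀ t ∈ Set.Ioc (0:ℝ) 1, A.op t y x = y

/-- `E^⊕ = { y ∈ [0,1] : y ⊳ 0 }`. -/
def UCA.E (A : UCA) : Set ℝ := {y ∈ Set.Icc (0:ℝ) 1 | A.Eats y 0}

/-- `V_{x,y} = inf { y ⊕_p x : p ∈ (0,1] }`. -/
noncomputable def UCA.V (A : UCA) (x y : ℝ) : ℝ :=
  sInf ((fun p => A.op p y x) '' Set.Ioc (0:ℝ) 1)

section Aux
variable {A : UCA} {x y : ℝ}

lemma aux_one_sub {p : ℝ} (hp : p ∈ Set.Ioo (0:ℝ) 1) : 1 - p ∈ Set.Ioo (0:ℝ) 1 :=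
  ⟨by linarith [hp.2], by linarith [hp.1]⟩

lemma aux_mem (hx : x ∈ Set.Icc (0:ℝ) 1) (hy : y ∈ Set.Icc (0:ℝ) 1) {p : ℝ}
    (hp : p ∈ Set.Ioo (0:ℝ) 1) : A.op p y x ∈ Set.Icc (0:ℝ) 1 :=
  A.mem p (Set.Ioo_subset_Icc_self hp) y hy x hx

lemma aux_xle (hMO : A.MO) (hx : x ∈ Set.Icc (0:ℝ) 1) (hy : y ∈ Set.Icc (0:ℝ) 1)
    (hxy : x ≤ y) {p : ℝ} (hp : p ∈ Set.Ioo (0:ℝ) 1) : x ≤ A.op p y x := by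
  have h1 := hMO x hx y hy x hx p hp hxy
  rwa [A.idem p hp x hx] at h1

lemma aux_ley (hMO : A.MO) (hx : x ∈ Set.Icc (0:ℝ) 1) (hy : y ∈ Set.Icc (0:ℝ) 1)
    (hxy : x ≤ y) {p : ℝ} (hp : p ∈ Set.Ioo (0:ℝ) 1) : A.op p y x ≤ y := by
  have h2 := hMO x hx y hy y hy (1-p) (aux_one_sub hp) hxy
  rw [A.idem (1-p) (aux_one_sub hp) y hy] at h2
  rw [A.comm p hp y hy x hx]
  exact h2

lemma aux_mono2 (hMO : A.MO) {p a b c : ℝ} (hp : p ∈ Set.Ioo (0:ℝ) 1)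
    (ha : a ∈ Set.Icc (0:ℝ) 1) (hb : b ∈ Set.Icc (0:ℝ) 1) (hc : c ∈ Set.Icc (0:ℝ) 1)
    (hbc : b ≤ c) : A.op p a b ≤ A.op p a c := by
  rw [A.comm p hp a ha b hb, A.comm p hp a ha c hc]
  exact hMO b hb c hc a ha (1-p) (aux_one_sub hp) hbc

/-- Identity I1 : `(y ⊕_a x) ⊕_u x = y ⊕_{au} x`. -/
lemma aux_I1 (hx : x ∈ Set.Icc (0:ℝ) 1) (hy : y ∈ Set.Icc (0:ℝ) 1) {a u : ℝ}
    (ha : a ∈ Set.Ioo (0:ℝ) 1) (hu : u ∈ Set.Ioo (0:ℝ) 1) :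
    A.op u (A.op a y x) x = A.op (a * u) y x := by
  have hau2 : a * u < 1 := by nlinarith [ha.1, ha.2, hu.1, hu.2]
  have hr : ((1 - a) * u / (1 - a * u)) ∈ Set.Ioo (0:ℝ) 1 := by
    constructor
    · apply div_pos (by nlinarith [ha.1, ha.2, hu.1]) (by linarith)
    · rw [div_lt_one (by linarith)]
      nlinarith [ha.1, ha.2, hu.1, hu.2]
  have h := A.assoc a ha u hu y hy x hx x hx
  rwa [A.idem _ hr x hx] at h

/-- Monotonicity in the parameter. -/
lemma aux_mono (hMO : A.MO) (hx : x ∈ Set.Icc (0:ℝ) 1) (hy : y ∈ Set.Icc (0:ℝ) 1)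
    (hxy : x ≤ y) {p p' : ℝ} (hp : p ∈ Set.Ioo (0:ℝ) 1) (hp' : p' ∈ Set.Ioo (0:ℝ) 1)
    (hpp' : p ≤ p') : A.op p y x ≤ A.op p' y x := by
  rcases eq_or_lt_of_le hpp' with h | h
  · rw [h]
  · have hP : (p' - p) / (p' * (1 - p)) ∈ Set.Ioo (0:ℝ) 1 := by
      constructor
      · exact div_pos (by linarith) (by nlinarith [hp.1, hp.2, hp'.1, hp'.2])
      · rw [div_lt_one (by nlinarith [hp.1, hp.2, hp'.1, hp'.2])]
        nlinarith [hp.1, hp.2, hp'.1, hp'.2]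
    set P := (p' - p) / (p' * (1 - p)) with hPdef
    have hassoc := A.assoc P hP p' hp' y hy y hy x hx
    rw [A.idem P hP y hy] at hassoc
    have h1 : p' ≠ 0 := ne_of_gt hp'.1
    have h2 : (1:ℝ) - p ≠ 0 := ne_of_gt (by linarith [hp.2])
    have hPp' : P * p' = (p' - p) / (1 - p) := by
      rw [eq_div_iff h2, hPdef]
      field_simp
    have hPp'lt : P * p' < 1 := by
      rw [hPp', div_lt_one (by linarith [hp.2])]; linarith [hp'.2]
    have hd : (1:ℝ) - P * p' ≠ 0 := ne_of_gt (by linarith)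
    have hR : (1 - P) * p' / (1 - P * p') = p := by
      rw [div_eq_iff hd, hPdef]
      field_simp
      ring
    rw [hR] at hassoc
    have hs : P * p' ∈ Set.Ioo (0:ℝ) 1 := by
      rw [hPp']
      constructor
      · exact div_pos (by linarith) (by linarith [hp.2])
      · rw [div_lt_one (by linarith [hp.2])]; linarith [hp'.2]
    have hfp := aux_mem (A := A) hx hy hp
    have h1 := hMO (A.op p y x) hfp y hy (A.op p y x) hfp (P * p') hs
      (aux_ley hMO hx hy hxy hp)
    rw [A.idem _ hs _ hfp] at h1
    calc A.op p y x ≤ A.op (P * p') y (A.op p y x) := h1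
    _ = A.op p' y x := hassoc.symm


lemma aux_bdd (hx : x ∈ Set.Icc (0:ℝ) 1) (hy : y ∈ Set.Icc (0:ℝ) 1) {p : ℝ}
    (hp : p ∈ Set.Ioo (0:ℝ) 1) : BddBelow ((fun s => A.op s y x) '' Set.Ioo p 1) := by
  refine ⟨0, ?_⟩
  rintro v ⟨s, hs, rfl⟩
  exact (aux_mem hx hy ⟨lt_trans hp.1 hs.1, hs.2⟩).1

lemma aux_ne {p : ℝ} (hp : p < 1) : ((fun s => A.op s y x) '' Set.Ioo p 1).Nonempty :=
  ⟨_, ⟨(p+1)/2, ⟨by linarith, by linarith⟩, rfl⟩⟩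

/-- Key Lemma C: right-continuity propagates from `p` down to `p*t`. -/
lemma aux_keyC (hMO : A.MO) (hUC : A.UC) (hx : x ∈ Set.Icc (0:ℝ) 1) (hy : y ∈ Set.Icc (0:ℝ) 1)
    (hxy : x ≤ y) (hx1 : x < 1) {p t : ℝ} (hp : p ∈ Set.Ioo (0:ℝ) 1) (ht : t ∈ Set.Ioo (0:ℝ) 1)
    (hfp1 : A.op p y x < 1)
    (hrc : sInf ((fun s => A.op s y x) '' Set.Ioo p 1) ≤ A.op p y x) :
    sInf ((fun s => A.op s y x) '' Set.Ioo (p * t) 1) ≤ A.op (p * t) y x := by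
  have hpt : p * t ∈ Set.Ioo (0:ℝ) 1 :=
    ⟨mul_pos hp.1 ht.1, by nlinarith [hp.1, hp.2, ht.1, ht.2]⟩
  set c := sInf ((fun s => A.op s y x) '' Set.Ioo (p*t) 1) with hc
  have hfpm := aux_mem (A := A) hx hy hp
  have hδ : (0:ℝ) < min (1 - A.op p y x) (1 - x) := lt_min (by linarith) (by linarith)
  have claimA : ∀ ε ∈ Set.Ioo (0:ℝ) (min (1 - A.op p y x) (1 - x)),
      c ≤ A.op t (A.op p y x + ε) (x + ε) ∧ A.op t (A.op p y x + ε) (x + ε) ≤ 1 := by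
    intro ε hε
    have hε1 : ε < 1 - A.op p y x := lt_of_lt_of_le hε.2 (min_le_left _ _)
    have hε2 : ε < 1 - x := lt_of_lt_of_le hε.2 (min_le_right _ _)
    have hfpε : A.op p y x + ε ∈ Set.Icc (0:ℝ) 1 := ⟨by linarith [hfpm.1, hε.1], by linarith⟩
    have hxε : x + ε ∈ Set.Icc (0:ℝ) 1 := ⟨by linarith [hx.1, hε.1], by linarith⟩
    constructor
    · have hlt : sInf ((fun s => A.op s y x) '' Set.Ioo p 1) < A.op p y x + ε := by
        have := hε.1; linarith
      obtain ⟨v, ⟨p', hp', rfl⟩, hv⟩ := (csInf_lt_iff (aux_bdd hx hy hp) (aux_ne hp.2)).1 hlt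
      have hp'01 : p' ∈ Set.Ioo (0:ℝ) 1 := ⟨lt_trans hp.1 hp'.1, hp'.2⟩
      have hmem : p' * t ∈ Set.Ioo (p*t) 1 :=
        ⟨by nlinarith [ht.1, hp'.1], by nlinarith [hp'01.1, hp'01.2, ht.1, ht.2]⟩
      have step1 : c ≤ A.op (p' * t) y x := csInf_le (aux_bdd hx hy hpt) ⟨p' * t, hmem, rfl⟩
      have step2 : A.op (p' * t) y x = A.op t (A.op p' y x) x := (aux_I1 hx hy hp'01 ht).symm
      have step3 : A.op t (A.op p' y x) x ≤ A.op t (A.op p y x + ε) x :=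
        hMO _ (aux_mem hx hy hp'01) _ hfpε x hx t ht (le_of_lt hv)
      have step4 : A.op t (A.op p y x + ε) x ≤ A.op t (A.op p y x + ε) (x + ε) :=
        aux_mono2 hMO ht hfpε hx hxε (by linarith [hε.1])
      calc c ≤ A.op (p'*t) y x := step1
        _ = _ := step2
        _ ≤ _ := step3
        _ ≤ _ := step4
    · exact (A.mem t (Set.Ioo_subset_Icc_self ht) _ hfpε _ hxε).2
  have hev : ∀ᶠ ε in 𝓝[>] (0:ℝ),
      c ≤ A.op t (A.op p y x + ε) (x + ε) ∧ A.op t (A.op p y x + ε) (x + ε) ≤ 1 := by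
    filter_upwards [Ioo_mem_nhdsGT_of_mem (Set.left_mem_Ico.2 hδ)] with ε hε using claimA ε hε
  have hbu : Filter.IsBoundedUnder (· ≤ ·) (𝓝[>] (0:ℝ))
      (fun ε => A.op t (A.op p y x + ε) (x + ε)) :=
    ⟨1, Filter.eventually_map.2 (by filter_upwards [hev] with ε h using h.2)⟩
  have h1 : c ≤ Filter.limsup (fun ε => A.op t (A.op p y x + ε) (x + ε)) (𝓝[>] (0:ℝ)) :=
    Filter.le_limsup_of_frequently_le ((hev.mono (fun ε h => h.1)).frequently) hbu
  have h2 := hUC (A.op p y x) ⟨hfpm.1, hfp1⟩ x ⟨hx.1, hx1⟩ t ht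
  have h3 := le_trans h1 h2
  rwa [aux_I1 hx hy hp ht] at h3


/-- Main: no right jump at interior points. -/
lemma aux_main (hMO : A.MO) (hUC : A.UC) (hx : x ∈ Set.Icc (0:ℝ) 1) (hy : y ∈ Set.Icc (0:ℝ) 1)
    (hxy : x ≤ y) {q : ℝ} (hq : q ∈ Set.Ioo (0:ℝ) 1) :
    sInf ((fun s => A.op s y x) '' Set.Ioo q 1) ≤ A.op q y x := by
  by_contra hcon
  push_neg at hcon
  have hmid : (q+1)/2 ∈ Set.Ioo q 1 := ⟨by linarith [hq.2, hq.1], by linarith [hq.2]⟩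
  have hmid01 : (q+1)/2 ∈ Set.Ioo (0:ℝ) 1 := ⟨by linarith [hq.1], hmid.2⟩
  have hL1 : sInf ((fun s => A.op s y x) '' Set.Ioo q 1) ≤ 1 :=
    le_trans (csInf_le (aux_bdd hx hy hq) ⟨(q+1)/2, hmid, rfl⟩) (aux_mem hx hy hmid01).2
  have hfq1 : A.op q y x < 1 := lt_of_lt_of_le hcon hL1
  have hx1 : x < 1 := lt_of_le_of_lt (aux_xle hMO hx hy hxy hq) hfq1
  by_cases hcase : ∃ b ∈ Set.Ioo q 1, ∀ p ∈ Set.Ioo q b, A.op p y x < 1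
  · obtain ⟨b, hb, hball⟩ := hcase
    -- every point of Ioo q b has a right jump
    have hjump : ∀ p ∈ Set.Ioo q b, A.op p y x < sInf ((fun s => A.op s y x) '' Set.Ioo p 1) := by
      intro p hpqb
      by_contra hle
      push_neg at hle
      have hp01 : p ∈ Set.Ioo (0:ℝ) 1 := ⟨lt_trans hq.1 hpqb.1, lt_trans hpqb.2 hb.2⟩
      have ht : q / p ∈ Set.Ioo (0:ℝ) 1 := ⟨div_pos hq.1 hp01.1, (div_lt_one hp01.1).2 hpqb.1⟩
      have hkey := aux_keyC hMO hUC hx hy hxy hx1 hp01 ht (hball p hpqb) hle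
      rw [mul_div_cancel₀ q (ne_of_gt hp01.1)] at hkey
      exact absurd hkey (not_le.2 hcon)
    -- clamped monotone function
    have hgmono : Monotone (fun s : ℝ => A.op (max q (min s b)) y x) := by
      intro s s' hss'
      have h1 : max q (min s b) ∈ Set.Ioo (0:ℝ) 1 := by
        constructor
        · exact lt_of_lt_of_le hq.1 (le_max_left _ _)
        · refine max_lt hq.2 (lt_of_le_of_lt (min_le_right _ _) hb.2)
      have h2 : max q (min s' b) ∈ Set.Ioo (0:ℝ) 1 := by
        constructor
        · exact lt_of_lt_of_le hq.1 (le_max_left _ _)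
        · refine max_lt hq.2 (lt_of_le_of_lt (min_le_right _ _) hb.2)
      exact aux_mono hMO hx hy hxy h1 h2
        (max_le_max (le_refl q) (min_le_min hss' (le_refl b)))
    have hgdisc : ∀ p ∈ Set.Ioo q b, ¬ ContinuousAt (fun s : ℝ => A.op (max q (min s b)) y x) p := by
      intro p hpqb hcont
      have hp01 : p ∈ Set.Ioo (0:ℝ) 1 := ⟨lt_trans hq.1 hpqb.1, lt_trans hpqb.2 hb.2⟩
      have hgp : max q (min p b) = p := by
        rw [min_eq_left hpqb.2.le, max_eq_right hpqb.1.le]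
      have htend : Filter.Tendsto (fun s : ℝ => A.op (max q (min s b)) y x) (𝓝[>] p)
          (𝓝 (A.op p y x)) := by
        have := hcont.continuousWithinAt (s := Set.Ioi p)
        rw [ContinuousWithinAt, hgp] at this
        exact this
      have hev1 := htend.eventually_lt_const (hjump p hpqb)
      have hev2 : ∀ᶠ s in 𝓝[>] p, s ∈ Set.Ioo p b :=
        Ioo_mem_nhdsGT_of_mem ⟨le_refl p, hpqb.2⟩
      obtain ⟨s, hs1, hs2⟩ := (hev1.and hev2).exists
      have hsval : max q (min s b) = s := by
        rw [min_eq_left hs2.2.le, max_eq_right (le_trans hpqb.1.le hs2.1.le)]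
      rw [hsval] at hs1
      have : sInf ((fun s => A.op s y x) '' Set.Ioo p 1) ≤ A.op s y x :=
        csInf_le (aux_bdd hx hy hp01) ⟨s, ⟨hs2.1, lt_trans hs2.2 hb.2⟩, rfl⟩
      linarith
    have hcount := hgmono.countable_not_continuousAt
    have hsubset : Set.Ioo q b ⊆ {s | ¬ ContinuousAt (fun s : ℝ => A.op (max q (min s b)) y x) s} :=
      fun p hp => hgdisc p hp
    have hCble : (Set.Ioo q b).Countable := hcount.mono hsubset
    have hcard := Cardinal.mk_Ioo_real hb.1
    have := hCble.le_aleph0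
    rw [hcard] at this
    exact absurd this (not_le.2 Cardinal.aleph0_lt_continuum)
  · push_neg at hcase
    have hall1 : ∀ s ∈ Set.Ioo q 1, A.op s y x = 1 := by
      intro s hs
      obtain ⟨p, hpq, hfp⟩ := hcase s hs
      have hp01 : p ∈ Set.Ioo (0:ℝ) 1 := ⟨lt_trans hq.1 hpq.1, lt_trans hpq.2 hs.2⟩
      have hs01 : s ∈ Set.Ioo (0:ℝ) 1 := ⟨lt_trans hq.1 hs.1, hs.2⟩
      have h1 : (1:ℝ) ≤ A.op s y x :=
        le_trans hfp (aux_mono hMO hx hy hxy hp01 hs01 hpq.2.le)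
      exact le_antisymm (aux_mem hx hy hs01).2 h1
    have hu : q / ((q+1)/2) ∈ Set.Ioo (0:ℝ) 1 :=
      ⟨div_pos hq.1 (by linarith [hq.1]), (div_lt_one (by linarith [hq.1])).2 hmid.1⟩
    have huq : q / ((q+1)/2) ∈ Set.Ioo q 1 := by
      refine ⟨?_, hu.2⟩
      rw [lt_div_iff₀ (by linarith [hq.1])]
      nlinarith [hq.1, hq.2]
    have hI := aux_I1 (A := A) hx hy hmid01 hu
    rw [mul_div_cancel₀ q (ne_of_gt hmid01.1)] at hI
    rw [hall1 _ hmid] at hI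
    have hge : A.op (q / ((q+1)/2)) y x ≤ A.op (q / ((q+1)/2)) 1 x :=
      hMO y hy 1 ⟨zero_le_one, le_refl 1⟩ x hx _ hu hy.2
    rw [hall1 _ huq] at hge
    rw [hI] at hge
    linarith

end Aux

/-- Lemma 2.14(i), second relation: for a convex algebra on `[0,1]` satisfying (MO) and (UC),
for all `x ≤ y` in `[0,1]` and `q ∈ (0,1)`, `y ⊕_p x → y ⊕_q x` as `p → q⁺`. -/
theorem stmt_3 (A : UCA) (hMO : A.MO) (hUC : A.UC) :
    ∀ x ∈ Set.Icc (0:ℝ) 1, ∀ y ∈ Set.Icc (0:ℝ) 1, x ≤ y → ∀ q ∈ Set.Ioo (0:ℝ) 1,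
      Filter.Tendsto (fun p => A.op p y x) (𝓝[>] q) (𝓝 (A.op q y x)) := by
  intro x hx y hy hxy q hq
  have hmain := aux_main hMO hUC hx hy hxy hq
  rw [tendsto_order]
  constructor
  · intro a ha
    filter_upwards [Ioo_mem_nhdsGT_of_mem ⟨le_refl q, hq.2⟩] with p hp
    have hp01 : p ∈ Set.Ioo (0:ℝ) 1 := ⟨lt_trans hq.1 hp.1, hp.2⟩
    exact lt_of_lt_of_le ha (aux_mono hMO hx hy hxy hq hp01 hp.1.le)
  · intro a ha
    have hlt : sInf ((fun s => A.op s y x) '' Set.Ioo q 1) < a := lt_of_le_of_lt hmain ha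
    obtain ⟨v, ⟨p', hp', rfl⟩, hv⟩ := (csInf_lt_iff (aux_bdd hx hy hq) (aux_ne hq.2)).1 hlt
    have hp'01 : p' ∈ Set.Ioo (0:ℝ) 1 := ⟨lt_trans hq.1 hp'.1, hp'.2⟩
    filter_upwards [Ioo_mem_nhdsGT_of_mem ⟨le_refl q, hp'.1⟩] with p hp
    have hp01 : p ∈ Set.Ioo (0:ℝ) 1 := ⟨lt_trans hq.1 hp.1, lt_trans hp.2 hp'.2⟩
    exact lt_of_le_of_lt (aux_mono hMO hx hy hxy hp01 hp'01 hp.2.le) hv
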